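/- Suppose the adoption probability depends only on the certificate, q(a, r) = q(r), and the model 𝓜_DM is sufficiently rich: for every probability distribution G on [0,1]² satisfying G({(l, r) : l ≤ r}) ≥ 1 − α, there exists (θ, P) ∈ 𝓜_DM under which the pair (L(δ(Y), θ), R(Y)) has distribution G. Then for any u ∈ [0,1], the worst-case risk bound sup over (θ, P) ∈ 𝓜_DM of E_P[L(δ_Q(Y), θ)] ≤ C + u·α·(1 − C) holds if and only if sup_{a ≤ α} { a · sup_{r ∈ [0,1]} q(r)·(1 − C) + (1 − a) · sup_{r ≥ C} q(r)·(r − C) } ≤ u·α·(1 − C). -/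

import Mathlib

open MeasureTheory Set

/-- Lemma (q_condition): if the adoption probability depends only on the certificate and
the decision-maker's model `M` is sufficiently rich, then the worst-case risk bound
`sup_{(θ,P) ∈ M} E_P[L(δ_Q(Y), θ)] ≤ C + u·α·(1-C)` holds if and only if
`sup_{a ≤ α} { a·sup_{r ∈ [0,1]} q(r)(1-C) + (1-a)·sup_{r ≥ C} q(r)(r-C) } ≤ u·α·(1-C)`. -/
theorem statement3
    {Y : Type*} [MeasurableSpace Y] {A : Type*} {Θ : Type*}
    (L : A → Θ → ℝ) (hL : ∀ a θ, L a θ ∈ Icc (0 : ℝ) 1)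
    (α : ℝ) (hα : α ∈ Ioo (0 : ℝ) 1)
    (δ : Y → A) (R : Y → ℝ) (hR01 : ∀ y, R y ∈ Icc (0 : ℝ) 1)
    (M : Set (Θ × Measure Y))
    (hMprob : ∀ p ∈ M, IsProbabilityMeasure p.2)
    (hMdef : ∀ p ∈ M, ENNReal.ofReal (1 - α) ≤ p.2 {y | L (δ y) p.1 ≤ R y})
    (C : ℝ) (hC : C ∈ Ico (0 : ℝ) 1)
    (q : ℝ → ℝ) (hq01 : ∀ r, q r ∈ Icc (0 : ℝ) 1) (hmeasq : Measurable q)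
    (hmeasL : ∀ θ : Θ, Measurable fun y => L (δ y) θ)
    (hmeasR : Measurable R)
    (hrich : ∀ G : Measure (ℝ × ℝ), IsProbabilityMeasure G →
      G (Icc (0 : ℝ) 1 ×ˢ Icc (0 : ℝ) 1) = 1 →
      ENNReal.ofReal (1 - α) ≤ G {x | x.1 ≤ x.2} →
      ∃ p ∈ M, Measure.map (fun y => (L (δ y) p.1, R y)) p.2 = G)
    (u : ℝ) (hu : u ∈ Icc (0 : ℝ) 1) :
    (∀ p ∈ M,
        ∫ y, (q (R y) * L (δ y) p.1 + (1 - q (R y)) * C) ∂p.2 ≤ C + u * α * (1 - C))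
      ↔ (∀ a : ℝ, 0 ≤ a → a ≤ α →
          a * sSup (q '' Icc (0 : ℝ) 1) * (1 - C)
            + (1 - a) * sSup ((fun r => q r * (r - C)) '' Icc C 1)
            ≤ u * α * (1 - C)) := by
  obtain ⟨hC0, hC1⟩ := hC
  obtain ⟨hα0, hα1⟩ := hα
  set S1 := sSup (q '' Icc (0 : ℝ) 1) with hS1def
  set S2 := sSup ((fun r => q r * (r - C)) '' Icc C 1) with hS2def
  have hS1ne : (q '' Icc (0 : ℝ) 1).Nonempty :=
    ⟨q 0, mem_image_of_mem _ (by constructor <;> norm_num)⟩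
  have hS1bdd : BddAbove (q '' Icc (0 : ℝ) 1) := by
    refine ⟨1, fun x hx => ?_⟩
    obtain ⟨r, _, rfl⟩ := hx
    exact (hq01 r).2
  have hS2ne : ((fun r => q r * (r - C)) '' Icc C 1).Nonempty :=
    ⟨_, mem_image_of_mem _ (⟨le_refl C, hC1.le⟩ : C ∈ Icc C 1)⟩
  have hS2bdd : BddAbove ((fun r => q r * (r - C)) '' Icc C 1) := by
    refine ⟨1, fun x hx => ?_⟩
    obtain ⟨r, hr, rfl⟩ := hx
    exact mul_le_one₀ (hq01 r).2 (by linarith [hr.1]) (by linarith [hr.2])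
  have hS1nonneg : 0 ≤ S1 :=
    le_trans (hq01 0).1 (le_csSup hS1bdd (mem_image_of_mem _ (by constructor <;> norm_num)))
  have hS2nonneg : 0 ≤ S2 := by
    have h0 : q C * (C - C) ∈ (fun r => q r * (r - C)) '' Icc C 1 :=
      mem_image_of_mem _ (⟨le_refl C, hC1.le⟩ : C ∈ Icc C 1)
    have := le_csSup hS2bdd h0
    simpa using this
  constructor
  · -- forward direction
    intro H a ha0 haα
    by_contra hcon
    push_neg at hcon
    set ε := (a * S1 * (1 - C) + (1 - a) * S2 - u * α * (1 - C)) / 2 with hεdef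
    have hε : 0 < ε := by simp only [hεdef]; linarith
    obtain ⟨x1, hx1mem, hx1⟩ :=
      exists_lt_of_lt_csSup hS1ne (show S1 - ε < S1 by linarith)
    obtain ⟨r1, hr1, rfl⟩ := hx1mem
    obtain ⟨x2, hx2mem, hx2⟩ :=
      exists_lt_of_lt_csSup hS2ne (show S2 - ε < S2 by linarith)
    obtain ⟨r2, hr2, rfl⟩ := hx2mem
    have hx2' : S2 - ε < q r2 * (r2 - C) := hx2
    set G : Measure (ℝ × ℝ) :=
      ENNReal.ofReal a • Measure.dirac ((1 : ℝ), r1)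
        + ENNReal.ofReal (1 - a) • Measure.dirac (r2, r2) with hGdef
    have ha1 : a ≤ 1 := le_trans haα hα1.le
    have hGapp : ∀ s : Set (ℝ × ℝ), G s =
        ENNReal.ofReal a * Measure.dirac ((1 : ℝ), r1) s
          + ENNReal.ofReal (1 - a) * Measure.dirac (r2, r2) s := by
      intro s
      simp [hGdef, Measure.add_apply, Measure.smul_apply, smul_eq_mul]
    have hGprob : IsProbabilityMeasure G := by
      constructor
      rw [hGapp]
      simp only [measure_univ, mul_one]
      rw [← ENNReal.ofReal_add ha0 (by linarith)]
      norm_num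
    have hr2' : r2 ∈ Icc (0 : ℝ) 1 := ⟨le_trans hC0 hr2.1, hr2.2⟩
    have hGsupp : G (Icc (0 : ℝ) 1 ×ˢ Icc (0 : ℝ) 1) = 1 := by
      rw [hGapp]
      rw [Measure.dirac_apply_of_mem (by exact ⟨⟨zero_le_one, le_refl 1⟩, hr1⟩),
        Measure.dirac_apply_of_mem (by exact ⟨hr2', hr2'⟩)]
      simp only [mul_one]
      rw [← ENNReal.ofReal_add ha0 (by linarith)]
      norm_num
    have hGle : ENNReal.ofReal (1 - α) ≤ G {x : ℝ × ℝ | x.1 ≤ x.2} := by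
      rw [hGapp]
      have h2 : Measure.dirac ((r2 : ℝ), r2) {x : ℝ × ℝ | x.1 ≤ x.2} = 1 :=
        Measure.dirac_apply_of_mem (le_refl r2)
      rw [h2, mul_one]
      calc ENNReal.ofReal (1 - α) ≤ ENNReal.ofReal (1 - a) :=
            ENNReal.ofReal_le_ofReal (by linarith)
        _ ≤ _ := le_add_self
    obtain ⟨p, hpM, hmap⟩ := hrich G hGprob hGsupp hGle
    set f : ℝ × ℝ → ℝ := fun x => q x.2 * x.1 + (1 - q x.2) * C with hfdef
    have hmeasf : Measurable f :=
      ((hmeasq.comp measurable_snd).mul measurable_fst).add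
        (((measurable_const.sub (hmeasq.comp measurable_snd))).mul measurable_const)
    have hintdirac : ∀ x : ℝ × ℝ, Integrable f (Measure.dirac x) := by
      intro x
      refine ⟨hmeasf.aestronglyMeasurable, ?_⟩
      rw [HasFiniteIntegral, lintegral_dirac]
      exact ENNReal.coe_lt_top
    have hint : ∫ y, (q (R y) * L (δ y) p.1 + (1 - q (R y)) * C) ∂p.2
        = ∫ x, f x ∂G := by
      rw [← hmap, integral_map ((hmeasL p.1).prodMk hmeasR).aemeasurable
        hmeasf.aestronglyMeasurable]
    have hGint : ∫ x, f x ∂G = a * f (1, r1) + (1 - a) * f (r2, r2) := by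
      rw [hGdef,
        integral_add_measure ((hintdirac _).smul_measure ENNReal.ofReal_ne_top)
          ((hintdirac _).smul_measure ENNReal.ofReal_ne_top),
        integral_smul_measure, integral_smul_measure, integral_dirac, integral_dirac,
        ENNReal.toReal_ofReal ha0, ENNReal.toReal_ofReal (by linarith)]
      simp [smul_eq_mul]
    have hkey := H p hpM
    rw [hint, hGint] at hkey
    have hf1 : f (1, r1) = C + q r1 * (1 - C) := by simp [hfdef]; ring
    have hf2 : f (r2, r2) = C + q r2 * (r2 - C) := by simp [hfdef]; ring
    rw [hf1, hf2] at hkey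
    -- hkey : a * (C + q r1 * (1-C)) + (1-a) * (C + q r2 * (r2-C)) ≤ C + u*α*(1-C)
    have hq1 : q r1 ≤ 1 := (hq01 r1).2
    have h1 : a * S1 * (1 - C) ≤ a * (q r1 + ε) * (1 - C) := by
      have : a * S1 ≤ a * (q r1 + ε) := mul_le_mul_of_nonneg_left (by linarith) ha0
      exact mul_le_mul_of_nonneg_right this (by linarith)
    have h2 : (1 - a) * S2 ≤ (1 - a) * (q r2 * (r2 - C) + ε) :=
      mul_le_mul_of_nonneg_left (by linarith [hx2']) (by linarith)
    nlinarith [mul_nonneg ha0 (show (0:ℝ) ≤ ε * C by positivity)]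
  · -- backward direction
    intro H p hpM
    have hprob := hMprob p hpM
    set P := p.2 with hPdef
    set θ := p.1 with hθdef
    set g : Y → ℝ := fun y => q (R y) * (L (δ y) θ - C) with hgdef
    have hmeasg : Measurable g :=
      (hmeasq.comp hmeasR).mul ((hmeasL θ).sub measurable_const)
    have hintg : Integrable g P := by
      refine ⟨hmeasg.aestronglyMeasurable, HasFiniteIntegral.of_bounded
        (C := 1) (ae_of_all _ fun y => ?_)⟩
      have h1 := (hq01 (R y)).1; have h2 := (hq01 (R y)).2
      have h3 := (hL (δ y) θ).1; have h4 := (hL (δ y) θ).2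
      rw [Real.norm_eq_abs, abs_mul]
      have : |q (R y)| ≤ 1 := abs_le.2 ⟨by linarith, h2⟩
      have : |L (δ y) θ - C| ≤ 1 := abs_le.2 ⟨by linarith, by linarith⟩
      calc |q (R y)| * |L (δ y) θ - C| ≤ 1 * 1 := by
            apply mul_le_mul <;> first | assumption | positivity
        _ = 1 := by norm_num
    set B := {y | L (δ y) θ ≤ R y} with hBdef
    have hBmeas : MeasurableSet B := measurableSet_le (hmeasL θ) hmeasR
    set b := (P B).toReal with hbdef
    have hb1 : 1 - α ≤ b := by
      have := hMdef p hpM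
      rw [← hPdef, ← hθdef, ← hBdef] at this
      have h := ENNReal.toReal_mono (measure_ne_top P B) this
      rwa [ENNReal.toReal_ofReal (by linarith)] at h
    have hble : b ≤ 1 := by
      have := prob_le_one (μ := P) (s := B)
      exact le_trans (ENNReal.toReal_mono ENNReal.one_ne_top this) (by norm_num)
    have hbc : (P Bᶜ).toReal = 1 - b := by
      rw [prob_compl_eq_one_sub hBmeas,
        ENNReal.toReal_sub_of_le prob_le_one ENNReal.one_ne_top]
      simp [hbdef]
    -- pointwise bounds
    have hptB : ∀ y ∈ B, g y ≤ S2 := by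
      intro y hy
      have hLR : L (δ y) θ ≤ R y := hy
      by_cases hRC : C ≤ R y
      · have h1 : g y ≤ q (R y) * (R y - C) :=
          mul_le_mul_of_nonneg_left (by linarith) (hq01 (R y)).1
        refine le_trans h1 (le_csSup hS2bdd ?_)
        exact mem_image_of_mem _ ⟨hRC, (hR01 y).2⟩
      · push_neg at hRC
        have : g y ≤ 0 :=
          mul_nonpos_of_nonneg_of_nonpos (hq01 (R y)).1 (by linarith)
        linarith
    have hptBc : ∀ y ∈ Bᶜ, g y ≤ S1 * (1 - C) := by
      intro y _
      have h1 : g y ≤ q (R y) * (1 - C) :=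
        mul_le_mul_of_nonneg_left (by linarith [(hL (δ y) θ).2]) (hq01 (R y)).1
      have h2 : q (R y) ≤ S1 := le_csSup hS1bdd (mem_image_of_mem _ (hR01 y))
      have := mul_le_mul_of_nonneg_right h2 (show (0:ℝ) ≤ 1 - C by linarith)
      linarith
    have hintB : ∫ y in B, g y ∂P ≤ b * S2 := by
      have h1 : ∫ y in B, g y ∂P ≤ ∫ _ in B, S2 ∂P :=
        setIntegral_mono_on hintg.integrableOn
          (integrableOn_const (measure_ne_top P B)) hBmeas hptB
      rwa [setIntegral_const, smul_eq_mul, measureReal_def, ← hbdef] at h1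
    have hintBc : ∫ y in Bᶜ, g y ∂P ≤ (1 - b) * (S1 * (1 - C)) := by
      have h1 : ∫ y in Bᶜ, g y ∂P ≤ ∫ _ in Bᶜ, S1 * (1 - C) ∂P :=
        setIntegral_mono_on hintg.integrableOn
          (integrableOn_const (measure_ne_top P Bᶜ)) hBmeas.compl hptBc
      rwa [setIntegral_const, smul_eq_mul, measureReal_def, hbc] at h1
    have hsplit : ∫ y, g y ∂P = ∫ y in B, g y ∂P + ∫ y in Bᶜ, g y ∂P :=
      (integral_add_compl hBmeas hintg).symm
    have hintg_le : ∫ y, g y ∂P ≤ (1 - b) * S1 * (1 - C) + b * S2 := by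
      rw [hsplit]; linarith [hintB, hintBc]
    have hHa := H (1 - b) (by linarith) (by linarith)
    have hfin : ∫ y, (q (R y) * L (δ y) θ + (1 - q (R y)) * C) ∂P
        = C + ∫ y, g y ∂P := by
      have heq : ∀ y, q (R y) * L (δ y) θ + (1 - q (R y)) * C = C + g y := by
        intro y; simp [hgdef]; ring
      simp_rw [heq]
      rw [integral_add (integrable_const C) hintg, integral_const]
      simp
    rw [hfin]
    have : (1 - b) * S1 * (1 - C) + (1 - (1 - b)) * S2 ≤ u * α * (1 - C) := hHa
    linarith
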